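/- Let V be a finite-dimensional real vector space, F a finite set of nonzero pairwise non-collinear linear functionals on V, and U a nonempty open subset of V on which every w ∈ F is nonvanishing. If a real linear combination ∑_{w∈F} c_w · (1/w) vanishes identically on U, then all coefficients c_w are zero. -/

import Mathlib

lemma avoid_kernels {V : Type*} [AddCommGroup V] [Module ℝ V]
    (G : Finset (V →ₗ[ℝ] ℝ)) (hG : ∀ φ ∈ G, φ ≠ 0) :
    ∃ u : V, ∀ φ ∈ G, φ u ≠ 0 := by
  classical
  by_contra h
  push_neg at h
  have hcov : ⋃ p ∈ G.image (fun φ => LinearMap.ker φ), (p : Set V) = Set.univ := by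
    ext v
    simp only [Set.mem_iUnion, Finset.mem_image, Set.mem_univ, iff_true]
    obtain ⟨φ, hφ, hv⟩ := h v
    exact ⟨LinearMap.ker φ, ⟨⟨φ, hφ, rfl⟩, hv⟩⟩
  have := Subspace.top_mem_of_biUnion_eq_univ hcov
  simp only [Finset.mem_image] at this
  obtain ⟨φ, hφ, hker⟩ := this
  exact hG φ hφ (LinearMap.ker_eq_top.mp hker)

/-- If a real linear combination of reciprocals of nonzero, pairwise
non-collinear linear functionals vanishes identically on a nonempty open set
where all the functionals are nonvanishing, then all coefficients vanish. -/
theorem stmt_1 (V : Type*) [AddCommGroup V] [Module ℝ V] [TopologicalSpace V]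
    [IsTopologicalAddGroup V] [ContinuousSMul ℝ V] [FiniteDimensional ℝ V]
    (F : Finset (V →ₗ[ℝ] ℝ))
    (hne : ∀ w ∈ F, w ≠ 0)
    (hcol : ∀ w₁ ∈ F, ∀ w₂ ∈ F, w₁ ≠ w₂ → ∀ c : ℝ, w₁ ≠ c • w₂)
    (U : Set V) (hU : U.Nonempty) (hUopen : IsOpen U)
    (hnv : ∀ w ∈ F, ∀ v ∈ U, w v ≠ 0)
    (c : (V →ₗ[ℝ] ℝ) → ℝ)
    (hvanish : ∀ v ∈ U, ∑ w ∈ F, c w * (w v)⁻¹ = 0) :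
    ∀ w ∈ F, c w = 0 := by
  classical
  obtain ⟨v₀, hv₀⟩ := hU
  set G : Finset (V →ₗ[ℝ] ℝ) :=
    F ∪ ((F ×ˢ F).filter (fun p => p.1 ≠ p.2)).image
      (fun p => p.2 v₀ • p.1 - p.1 v₀ • p.2) with hG
  have hGnz : ∀ φ ∈ G, φ ≠ 0 := by
    intro φ hφ
    rw [hG, Finset.mem_union] at hφ
    rcases hφ with h | h
    · exact hne φ h
    · simp only [Finset.mem_image, Finset.mem_filter, Finset.mem_product] at h
      obtain ⟨⟨w₁, w₂⟩, ⟨⟨h1, h2⟩, hne12⟩, rfl⟩ := h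
      intro h0
      have h0' : w₂ v₀ • w₁ = w₁ v₀ • w₂ := by rwa [sub_eq_zero] at h0
      have hw2 : w₂ v₀ ≠ 0 := hnv w₂ h2 v₀ hv₀
      exact hcol w₁ h1 w₂ h2 hne12 ((w₂ v₀)⁻¹ * w₁ v₀)
        (by rw [mul_smul, ← h0', inv_smul_smul₀ hw2])
  obtain ⟨u, hu⟩ := avoid_kernels G hGnz
  have hu1 : ∀ w ∈ F, w u ≠ 0 := fun w hw => hu w (Finset.mem_union_left _ hw)
  have hu2 : ∀ w₁ ∈ F, ∀ w₂ ∈ F, w₁ ≠ w₂ → w₂ v₀ * w₁ u - w₁ v₀ * w₂ u ≠ 0 := by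
    intro w₁ h1 w₂ h2 h12
    have hmem : (w₂ v₀ • w₁ - w₁ v₀ • w₂) ∈ G := by
      rw [hG, Finset.mem_union]
      right
      exact Finset.mem_image.mpr ⟨⟨w₁, w₂⟩,
        Finset.mem_filter.mpr ⟨Finset.mem_product.mpr ⟨h1, h2⟩, h12⟩, rfl⟩
    have := hu _ hmem
    simpa [LinearMap.sub_apply, LinearMap.smul_apply, smul_eq_mul] using this
  -- line through v₀ in direction u
  have hcont : Continuous (fun t : ℝ => v₀ + t • u) :=
    continuous_const.add (continuous_id.smul continuous_const)
  have hSopen : IsOpen ((fun t : ℝ => v₀ + t • u) ⁻¹' U) := hUopen.preimage hcont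
  have h0S : (0 : ℝ) ∈ (fun t : ℝ => v₀ + t • u) ⁻¹' U := by
    simp [hv₀]
  obtain ⟨ε, hε, hball⟩ := Metric.isOpen_iff.mp hSopen 0 h0S
  have hIoo : Set.Ioo (-ε) ε ⊆ (fun t : ℝ => v₀ + t • u) ⁻¹' U := by
    intro t ht
    apply hball
    rw [Real.ball_eq_Ioo]
    simpa using ht
  set p : Polynomial ℝ := ∑ w ∈ F, Polynomial.C (c w) *
    ∏ w' ∈ F.erase w, (Polynomial.C (w' u) * Polynomial.X + Polynomial.C (w' v₀)) with hp
  have heval : ∀ t : ℝ, v₀ + t • u ∈ U → p.eval t = 0 := by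
    intro t ht
    have hv := hvanish _ ht
    have hProd : ∀ w' : V →ₗ[ℝ] ℝ, w' u * t + w' v₀ = w' (v₀ + t • u) := by
      intro w'; simp [map_add, map_smul, smul_eq_mul]; ring
    have h1 : p.eval t = ∑ w ∈ F, c w * ∏ w' ∈ F.erase w, w' (v₀ + t • u) := by
      simp [hp, Polynomial.eval_finset_sum, Polynomial.eval_prod, hProd]
    rw [h1]
    have h2 : ∀ w ∈ F, c w * ∏ w' ∈ F.erase w, w' (v₀ + t • u)
        = (c w * (w (v₀ + t • u))⁻¹) * ∏ w' ∈ F, w' (v₀ + t • u) := by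
      intro w hw
      rw [← Finset.mul_prod_erase F _ hw, ← mul_assoc, mul_assoc (c w),
        inv_mul_cancel₀ (hnv w hw _ ht), mul_one]
    rw [Finset.sum_congr rfl h2, ← Finset.sum_mul, hv, zero_mul]
  have hp0 : p = 0 := by
    apply Polynomial.eq_zero_of_infinite_isRoot
    apply Set.Infinite.mono (s := Set.Ioo (-ε) ε)
    · intro t ht
      exact heval t (hIoo ht)
    · exact Set.Ioo_infinite (by linarith)
  intro w hw
  have hwu := hu1 w hw
  have hev : p.eval (-(w v₀) / w u) = 0 := by rw [hp0]; simp
  rw [hp, Polynomial.eval_finset_sum] at hev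
  rw [Finset.sum_eq_single_of_mem w hw ?side] at hev
  case side =>
    intro w'' hw'' hne''
    rw [Polynomial.eval_mul, Polynomial.eval_prod]
    apply mul_eq_zero_of_right
    apply Finset.prod_eq_zero (Finset.mem_erase.mpr ⟨fun h => hne'' h.symm, hw⟩)
    simp only [Polynomial.eval_add, Polynomial.eval_mul, Polynomial.eval_C, Polynomial.eval_X]
    field_simp
    ring
  rw [Polynomial.eval_mul, Polynomial.eval_C, Polynomial.eval_prod] at hev
  rcases mul_eq_zero.mp hev with h | h
  · exact h
  · exfalso
    apply Finset.prod_ne_zero_iff.mpr ?_ h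
    intro w' hw'
    obtain ⟨hne', hw'F⟩ := Finset.mem_erase.mp hw'
    simp only [Polynomial.eval_add, Polynomial.eval_mul, Polynomial.eval_C, Polynomial.eval_X]
    intro h0
    apply hu2 w' hw'F w hw hne'
    field_simp at h0
    linarith
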